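/- Let (X, T) be a metrizable topological space and let δ_T(x,A) = 0 if x is in the closure of A and δ_T(x,A) = ∞ otherwise. Then the approach space (X, δ_T) is *-metrizable for every continuous t-norm * on [0,1]. -/

import Mathlib

open scoped ENNReal

/-- A distance distribution: a map `[0,∞] → [0,1]` with value `0` at `0`, `1` at `∞`,
monotone and left-continuous on `(0,∞)`. -/
structure IsDistanceDistribution (φ : ℝ≥0∞ → ℝ) : Prop where
  mem : ∀ t, φ t ∈ Set.Icc (0:ℝ) 1
  zero : φ 0 = 0
  top : φ ⊤ = 1
  mono : Monotone φ
  leftCont : ∀ t : ℝ≥0∞, 0 < t → t ≠ ⊤ → φ t = ⨆ s : {s : ℝ≥0∞ // s < t}, φ s.1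

/-- A continuous t-norm on the interval `[a,b] ⊆ ℝ`. -/
structure IsContinuousTNorm (a b : ℝ) (m : ℝ → ℝ → ℝ) : Prop where
  mem : ∀ ⦃p q : ℝ⦄, p ∈ Set.Icc a b → q ∈ Set.Icc a b → m p q ∈ Set.Icc a b
  comm : ∀ ⦃p q : ℝ⦄, p ∈ Set.Icc a b → q ∈ Set.Icc a b → m p q = m q p
  assoc : ∀ ⦃p q r : ℝ⦄, p ∈ Set.Icc a b → q ∈ Set.Icc a b → r ∈ Set.Icc a b →
    m (m p q) r = m p (m q r)
  unit : ∀ ⦃p : ℝ⦄, p ∈ Set.Icc a b → m p b = p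
  mono : ∀ ⦃p p' q q' : ℝ⦄, p ∈ Set.Icc a b → p' ∈ Set.Icc a b → q ∈ Set.Icc a b →
    q' ∈ Set.Icc a b → p ≤ p' → q ≤ q' → m p q ≤ m p' q'
  continuous : ContinuousOn (fun x : ℝ × ℝ => m x.1 x.2) (Set.Icc a b ×ˢ Set.Icc a b)

/-- `α` is a probabilistic metric on `X` with respect to the t-norm `m` on `[0,1]`. -/
structure IsProbMetric {X : Type*} (m : ℝ → ℝ → ℝ) (α : X → X → ℝ≥0∞ → ℝ) : Prop where
  dd : ∀ x y, IsDistanceDistribution (α x y)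
  refl : ∀ x (t : ℝ≥0∞), 0 < t → α x x t = 1
  symm : ∀ x y t, α x y t = α y x t
  sep : ∀ x y, (∀ t : ℝ≥0∞, 0 < t → α x y t = 1) → x = y
  triangle : ∀ x y z (r s : ℝ≥0∞), m (α y z r) (α x y s) ≤ α x z (r + s)

/-- The approach distance induced by a probabilistic metric:
`δ_α(x,A) = inf { r | sup_{a ∈ A} α(x,a,r) = 1 }`. -/
noncomputable def probDist {X : Type*} (α : X → X → ℝ≥0∞ → ℝ) (x : X) (A : Set X) : ℝ≥0∞ :=
  sInf {r : ℝ≥0∞ | sSup ((fun a => α x a r) '' A) = 1}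

/-- `δ` is an approach structure on `X`. -/
structure IsApproach {X : Type*} (δ : X → Set X → ℝ≥0∞) : Prop where
  point : ∀ x, δ x {x} = 0
  empty : ∀ x, δ x (∅ : Set X) = ⊤
  union : ∀ x A B, δ x (A ∪ B) = min (δ x A) (δ x B)
  triangle : ∀ x (A B : Set X), δ x A ≤ (⨆ b : B, δ b.1 A) + δ x B

/-- An approach structure is probabilistic metrizable w.r.t. the t-norm `m`. -/
def ProbMetrizable {X : Type*} (m : ℝ → ℝ → ℝ) (δ : X → Set X → ℝ≥0∞) : Prop :=
  ∃ α : X → X → ℝ≥0∞ → ℝ, IsProbMetric m α ∧ ∀ x A, δ x A = probDist α x A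

/-- The minimum t-norm. -/
def minT : ℝ → ℝ → ℝ := fun p q => min p q
/-- The product t-norm. -/
def prodT : ℝ → ℝ → ℝ := fun p q => p * q
/-- The Łukasiewicz t-norm. -/
def lukT : ℝ → ℝ → ℝ := fun p q => max 0 (p + q - 1)

/-- `q⁻`: the largest idempotent element of `m` in `[a, q]`. -/
noncomputable def idemBelow (a : ℝ) (m : ℝ → ℝ → ℝ) (q : ℝ) : ℝ :=
  sSup {p : ℝ | p ∈ Set.Icc a q ∧ m p p = p}

-- Auxiliary lemmas

lemma aux_nonneg {u d : ℝ} (hu : 0 ≤ u) (hd : 0 ≤ d) : 0 ≤ u / (u + d) :=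
  div_nonneg hu (by linarith)

lemma aux_le_one {u d : ℝ} (hu : 0 ≤ u) (hd : 0 ≤ d) : u / (u + d) ≤ 1 := by
  rcases eq_or_lt_of_le (by linarith : (0:ℝ) ≤ u + d) with h | h
  · simp [← h]
  · rw [div_le_one h]; linarith

lemma aux_mono {u v d : ℝ} (hu : 0 ≤ u) (huv : u ≤ v) (hd : 0 ≤ d) :
    u / (u + d) ≤ v / (v + d) := by
  rcases eq_or_lt_of_le (by linarith : (0:ℝ) ≤ u + d) with h | h
  · have hu0 : u = 0 := by linarith
    simp [hu0]
    exact aux_nonneg (by linarith) hd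
  · rw [div_le_div_iff₀ h (by linarith)]; nlinarith

lemma aux_anti {u d d' : ℝ} (hu : 0 ≤ u) (hd' : 0 ≤ d') (hdd : d' ≤ d) :
    u / (u + d) ≤ u / (u + d') := by
  rcases eq_or_lt_of_le (by linarith : (0:ℝ) ≤ u + d') with h | h
  · have : u = 0 := by linarith
    simp [this]
  · rw [div_le_div_iff₀ (by linarith) h]; nlinarith

lemma aux_tri {r s a b c : ℝ} (hr : 0 ≤ r) (hs : 0 ≤ s) (ha : 0 ≤ a) (hb : 0 ≤ b)
    (hc : 0 ≤ c) (hcab : c ≤ a + b) :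
    min (r / (r + a)) (s / (s + b)) ≤ (r + s) / ((r + s) + c) := by
  have step : min (r / (r + a)) (s / (s + b)) ≤ (r + s) / ((r + s) + (a + b)) := by
    by_contra hcon
    push_neg at hcon
    have h1 : (r + s) / ((r + s) + (a + b)) < r / (r + a) := lt_of_lt_of_le hcon (min_le_left _ _)
    have h2 : (r + s) / ((r + s) + (a + b)) < s / (s + b) := lt_of_lt_of_le hcon (min_le_right _ _)
    have hra : 0 < r + a := by
      rcases eq_or_lt_of_le (by linarith : (0:ℝ) ≤ r + a) with h | h
      · exfalso
        have hr0 : r = 0 := by linarith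
        have he : r / (r + a) = 0 := by simp [hr0, ← h]
        have h0 : 0 ≤ (r + s) / ((r + s) + (a + b)) := div_nonneg (by linarith) (by linarith)
        rw [he] at h1; linarith
      · exact h
    have hsb : 0 < s + b := by
      rcases eq_or_lt_of_le (by linarith : (0:ℝ) ≤ s + b) with h | h
      · exfalso
        have hs0 : s = 0 := by linarith
        have he : s / (s + b) = 0 := by simp [hs0, ← h]
        have h0 : 0 ≤ (r + s) / ((r + s) + (a + b)) := div_nonneg (by linarith) (by linarith)
        rw [he] at h2; linarith
      · exact h
    have hden : 0 < (r + s) + (a + b) := by linarith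
    rw [div_lt_div_iff₀ hden hra] at h1
    rw [div_lt_div_iff₀ hden hsb] at h2
    nlinarith
  exact step.trans (aux_anti (by linarith) hc hcab)

noncomputable def myAlpha {X : Type*} [MetricSpace X] (x y : X) (t : ℝ≥0∞) : ℝ :=
  if t = ⊤ then 1 else t.toReal / (t.toReal + dist x y)

section
variable {X : Type*} [MetricSpace X] (x y : X)

lemma myAlpha_top : myAlpha x y ⊤ = 1 := by simp [myAlpha]

lemma myAlpha_ne_top {t : ℝ≥0∞} (ht : t ≠ ⊤) :
    myAlpha x y t = t.toReal / (t.toReal + dist x y) := by simp [myAlpha, ht]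

lemma myAlpha_zero : myAlpha x y 0 = 0 := by simp [myAlpha]

lemma myAlpha_mem (t : ℝ≥0∞) : myAlpha x y t ∈ Set.Icc (0:ℝ) 1 := by
  rcases eq_or_ne t ⊤ with rfl | ht
  · simp [myAlpha]
  · rw [myAlpha_ne_top x y ht]
    exact ⟨aux_nonneg ENNReal.toReal_nonneg dist_nonneg,
      aux_le_one ENNReal.toReal_nonneg dist_nonneg⟩

lemma myAlpha_mono : Monotone (myAlpha x y) := by
  intro s t hst
  rcases eq_or_ne t ⊤ with rfl | ht
  · rw [myAlpha_top]; exact (myAlpha_mem x y s).2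
  · have hs : s ≠ ⊤ := fun h => ht (top_le_iff.mp (h ▸ hst))
    rw [myAlpha_ne_top x y ht, myAlpha_ne_top x y hs]
    exact aux_mono ENNReal.toReal_nonneg
      (ENNReal.toReal_le_toReal hs ht |>.mpr hst) dist_nonneg

lemma myAlpha_symm (t : ℝ≥0∞) : myAlpha x y t = myAlpha y x t := by
  simp [myAlpha, dist_comm]

lemma myAlpha_refl {t : ℝ≥0∞} (ht : 0 < t) : myAlpha x x t = 1 := by
  rcases eq_or_ne t ⊤ with rfl | h
  · exact myAlpha_top x x
  · rw [myAlpha_ne_top x x h]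
    have : 0 < t.toReal := ENNReal.toReal_pos ht.ne' h
    simp [dist_self, div_self this.ne']

lemma myAlpha_leftCont (t : ℝ≥0∞) (ht : 0 < t) (ht' : t ≠ ⊤) :
    myAlpha x y t = ⨆ s : {s : ℝ≥0∞ // s < t}, myAlpha x y s.1 := by
  have hne : Nonempty {s : ℝ≥0∞ // s < t} := ⟨⟨0, ht⟩⟩
  have hbdd : BddAbove (Set.range fun s : {s : ℝ≥0∞ // s < t} => myAlpha x y s.1) := by
    refine ⟨1, ?_⟩
    rintro _ ⟨s, rfl⟩
    exact (myAlpha_mem x y s.1).2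
  refine le_antisymm ?_ (ciSup_le fun s => myAlpha_mono x y s.2.le)
  set t0 := t.toReal with ht0def
  have ht0 : 0 < t0 := ENNReal.toReal_pos ht.ne' ht'
  set d := dist x y with hd
  rcases eq_or_lt_of_le (dist_nonneg : (0:ℝ) ≤ d) with hd0 | hd0
  · -- d = 0 : use s = t/2
    have h2 : (t/2 : ℝ≥0∞) < t := ENNReal.half_lt_self ht.ne' ht'
    have h2t : (t/2 : ℝ≥0∞) ≠ ⊤ := h2.ne_top
    have h2pos : 0 < (t/2 : ℝ≥0∞).toReal := ENNReal.toReal_pos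
      (by simp [ENNReal.div_eq_top, ht.ne']) h2t
    have hdz : d = 0 := hd.trans hd0.symm
    have : myAlpha x y (t/2) = 1 := by
      rw [myAlpha_ne_top x y h2t, ← hd, hdz, add_zero]
      exact div_self h2pos.ne'
    calc myAlpha x y t ≤ 1 := (myAlpha_mem x y t).2
      _ = myAlpha x y (t/2) := this.symm
      _ ≤ _ := le_ciSup hbdd ⟨t/2, h2⟩
  · -- d > 0 : epsilon argument
    refine le_of_forall_pos_le_add fun ε hε => ?_
    set u := t0 - min (t0/2) (ε * d) with hu
    have humin : 0 < min (t0/2) (ε * d) := lt_min (by linarith) (by positivity)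
    have hu0 : 0 < u := by
      have := min_le_left (t0/2) (ε * d); simp only [hu]; linarith
    have hut : u < t0 := by simp only [hu]; linarith
    have hlt : ENNReal.ofReal u < t :=
      (ENNReal.ofReal_lt_iff_lt_toReal hu0.le ht').mpr hut
    have hval : myAlpha x y (ENNReal.ofReal u) = u / (u + d) := by
      rw [myAlpha_ne_top x y ENNReal.ofReal_ne_top, ENNReal.toReal_ofReal hu0.le]
    have key : t0 / (t0 + d) ≤ u / (u + d) + ε := by
      have h1 : 0 < t0 + d := by linarith
      have h2 : 0 < u + d := by linarith
      rw [div_add' _ _ _ h2.ne', div_le_div_iff₀ h1 h2]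
      have hd2 : t0 - u ≤ ε * d := by
        have := min_le_right (t0/2) (ε * d); simp only [hu]; linarith
      nlinarith [mul_le_mul_of_nonneg_left hd2 hd0.le,
        mul_nonneg (mul_nonneg hε.le hu0.le) ht0.le,
        mul_nonneg (mul_nonneg hε.le hu0.le) hd0.le,
        mul_nonneg (mul_nonneg hε.le hd0.le) ht0.le]
    calc myAlpha x y t = t0 / (t0 + d) := myAlpha_ne_top x y ht'
      _ ≤ u / (u + d) + ε := key
      _ = myAlpha x y (ENNReal.ofReal u) + ε := by rw [hval]
      _ ≤ _ + ε := by gcongr; exact le_ciSup hbdd ⟨_, hlt⟩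

lemma myAlpha_sep (h : ∀ t : ℝ≥0∞, 0 < t → myAlpha x y t = 1) : x = y := by
  have h1 := h 1 (by norm_num)
  rw [myAlpha_ne_top x y (by norm_num)] at h1
  simp only [ENNReal.toReal_one] at h1
  have hd : dist x y = 0 := by
    by_contra hd
    have hd' : 0 < dist x y := lt_of_le_of_ne dist_nonneg (Ne.symm hd)
    have : (1:ℝ) / (1 + dist x y) < 1 := by
      rw [div_lt_one (by linarith)]; linarith
    rw [h1] at this; exact lt_irrefl 1 this
  exact dist_le_zero.mp hd.le

lemma myAlpha_tri (z : X) (r s : ℝ≥0∞) :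
    min (myAlpha y z r) (myAlpha x y s) ≤ myAlpha x z (r + s) := by
  rcases eq_or_ne (r + s) ⊤ with h | h
  · rw [h, myAlpha_top]
    exact (min_le_left _ _).trans (myAlpha_mem y z r).2
  · have hr : r ≠ ⊤ := fun hr => h (by simp [hr])
    have hs : s ≠ ⊤ := fun hs => h (by simp [hs])
    rw [myAlpha_ne_top y z hr, myAlpha_ne_top x y hs, myAlpha_ne_top x z h,
      ENNReal.toReal_add hr hs]
    exact aux_tri ENNReal.toReal_nonneg ENNReal.toReal_nonneg dist_nonneg dist_nonneg
      dist_nonneg ((dist_triangle x y z).trans_eq (add_comm _ _))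

end
section Main
variable {X : Type*} [MetricSpace X]

lemma myAlpha_bdd (x : X) (A : Set X) (r : ℝ≥0∞) :
    BddAbove ((fun a => myAlpha x a r) '' A) := by
  refine ⟨1, ?_⟩
  rintro _ ⟨a, -, rfl⟩
  exact (myAlpha_mem x a r).2

lemma probDist_mem_closure {x : X} {A : Set X} (hx : x ∈ closure A) :
    probDist (fun x y => myAlpha x y) x A = 0 := by
  have hA : A.Nonempty := by
    rcases A.eq_empty_or_nonempty with rfl | h
    · simp at hx
    · exact h
  have hS : ∀ r : ℝ≥0∞, 0 < r →
      r ∈ {r : ℝ≥0∞ | sSup ((fun a => myAlpha x a r) '' A) = 1} := by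
    intro r hr
    have hle : sSup ((fun a => myAlpha x a r) '' A) ≤ 1 := by
      refine Real.sSup_le ?_ zero_le_one
      rintro _ ⟨a, -, rfl⟩
      exact (myAlpha_mem x a r).2
    refine le_antisymm hle ?_
    rcases eq_or_ne r ⊤ with rfl | hrt
    · obtain ⟨a, ha⟩ := hA
      have : myAlpha x a ⊤ ∈ (fun a => myAlpha x a ⊤) '' A := ⟨a, ha, rfl⟩
      calc (1:ℝ) = myAlpha x a ⊤ := (myAlpha_top x a).symm
        _ ≤ _ := le_csSup (myAlpha_bdd x A ⊤) this
    · by_contra hcon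
      push_neg at hcon
      set S := sSup ((fun a => myAlpha x a r) '' A) with hSdef
      have hS0 : 0 ≤ S := by
        obtain ⟨a, ha⟩ := hA
        exact le_trans (myAlpha_mem x a r).1 (le_csSup (myAlpha_bdd x A r) ⟨a, ha, rfl⟩)
      set ε := 1 - S with hε
      have hε0 : 0 < ε := by simp only [hε]; linarith
      have hr0 : 0 < r.toReal := ENNReal.toReal_pos hr.ne' hrt
      obtain ⟨a, haA, hdist⟩ := Metric.mem_closure_iff.mp hx (r.toReal * ε)
        (by positivity)
      have hval : myAlpha x a r = r.toReal / (r.toReal + dist x a) :=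
        myAlpha_ne_top x a hrt
      have hgt : S < myAlpha x a r := by
        rw [hval, hε] at *
        have hd0 : 0 ≤ dist x a := dist_nonneg
        rw [lt_div_iff₀ (by linarith)]
        nlinarith
      exact absurd (le_csSup (myAlpha_bdd x A r) ⟨a, haA, rfl⟩) (not_le.mpr hgt)
  refine le_antisymm ?_ zero_le
  refine ENNReal.le_of_forall_pos_le_add fun ε hε _ => ?_
  have : (ε : ℝ≥0∞) > 0 := by exact_mod_cast hε
  simpa [probDist] using sInf_le (hS ε this)

lemma probDist_not_mem_closure {x : X} {A : Set X} (hx : x ∉ closure A) :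
    probDist (fun x y => myAlpha x y) x A = ⊤ := by
  rw [probDist, sInf_eq_top]
  intro r hr
  by_contra hrt
  rw [Metric.mem_closure_iff] at hx
  push_neg at hx
  obtain ⟨ε, hε0, hε⟩ := hx
  have hbound : ∀ y ∈ (fun a => myAlpha x a r) '' A, y ≤ r.toReal / (r.toReal + ε) := by
    rintro _ ⟨a, ha, rfl⟩
    show myAlpha x a r ≤ _
    rw [myAlpha_ne_top x a hrt]
    exact aux_anti ENNReal.toReal_nonneg hε0.le (hε a ha)
  have h1 : (1:ℝ) ≤ r.toReal / (r.toReal + ε) := by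
    rw [← hr]
    exact Real.sSup_le hbound (div_nonneg ENNReal.toReal_nonneg (by positivity))
  have h2 : r.toReal / (r.toReal + ε) < 1 := by
    rw [div_lt_one (by positivity)]
    linarith [ENNReal.toReal_nonneg (a := r)]
  linarith

end Main

open Classical in
theorem stmt16 {X : Type*} [TopologicalSpace X] [TopologicalSpace.MetrizableSpace X]
    (m : ℝ → ℝ → ℝ) (hm : IsContinuousTNorm 0 1 m) :
    ProbMetrizable m
      (fun (x : X) (A : Set X) => if x ∈ closure A then 0 else ⊤) := by
  letI : MetricSpace X := TopologicalSpace.metrizableSpaceMetric X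
  have hmmin : ∀ p q : ℝ, p ∈ Set.Icc (0:ℝ) 1 → q ∈ Set.Icc (0:ℝ) 1 →
      m p q ≤ min p q := by
    intro p q hp hq
    have h1 : m p q ≤ p := by
      have := hm.mono hp hp hq (Set.mem_Icc.mpr ⟨zero_le_one, le_refl 1⟩)
        (le_refl p) hq.2
      rwa [hm.unit hp] at this
    have h2 : m p q ≤ q := by
      rw [hm.comm hp hq]
      have := hm.mono hq hq hp (Set.mem_Icc.mpr ⟨zero_le_one, le_refl 1⟩)
        (le_refl q) hp.2
      rwa [hm.unit hq] at this
    exact le_min h1 h2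
  refine ⟨fun x y => myAlpha x y, ⟨?_, ?_, ?_, ?_, ?_⟩, ?_⟩
  · exact fun x y => ⟨myAlpha_mem x y, myAlpha_zero x y, myAlpha_top x y,
      myAlpha_mono x y, myAlpha_leftCont x y⟩
  · exact fun x t ht => myAlpha_refl x ht
  · exact fun x y t => myAlpha_symm x y t
  · exact fun x y h => myAlpha_sep x y h
  · intro x y z r s
    exact le_trans (hmmin _ _ (myAlpha_mem y z r) (myAlpha_mem x y s))
      (myAlpha_tri x y z r s)
  · intro x A
    by_cases hx : x ∈ closure A
    · simp only [hx, if_true]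
      exact (probDist_mem_closure hx).symm
    · simp only [hx, if_false]
      exact (probDist_not_mem_closure hx).symm
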